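/- Let n be a positive integer, let W be an invertible n×n real matrix, and let λ₁, …, λₙ denote the eigenvalues of the symmetric positive definite matrix WᵀW (the squared singular values of W). Then the determinant of the linear endomorphism L of the space of n×n real matrices defined by L(E) = E + (W⁻¹ · E · W⁻¹)ᵀ equals ∏ᵢ (1 + λᵢ⁻¹) · ∏_{i<j} (1 − λᵢ⁻¹ λⱼ⁻¹). -/

import Mathlib

open Matrix Finset

/-- The linear map `E ↦ E + (W⁻¹ E W⁻¹)ᵀ` on `n × n` real matrices. -/
noncomputable def lemma1Deriv (n : ℕ) (W : Matrix (Fin n) (Fin n) ℝ) :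
    Matrix (Fin n) (Fin n) ℝ →ₗ[ℝ] Matrix (Fin n) (Fin n) ℝ where
  toFun E := E + (W⁻¹ * E * W⁻¹)ᵀ
  map_add' E F := by
    simp [Matrix.mul_add, Matrix.add_mul, Matrix.transpose_add]
    abel
  map_smul' c E := by
    simp [Matrix.mul_smul, Matrix.smul_mul, Matrix.transpose_smul, smul_add]

section Aux

variable {n : ℕ}

/-- Entrywise map `F ↦ (i j ↦ F i j + c i j * F j i)`. -/
noncomputable def gMap (n : ℕ) (c : Fin n → Fin n → ℝ) :
    Matrix (Fin n) (Fin n) ℝ →ₗ[ℝ] Matrix (Fin n) (Fin n) ℝ where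
  toFun F := Matrix.of fun i j => F i j + c i j * F j i
  map_add' E F := by
    ext i j
    simp [Matrix.add_apply]
    ring
  map_smul' r F := by
    ext i j
    simp [Matrix.smul_apply]
    ring

/-- Entrywise scaling map. -/
noncomputable def dMap (n : ℕ) (μ : Fin n → Fin n → ℝ) :
    Matrix (Fin n) (Fin n) ℝ →ₗ[ℝ] Matrix (Fin n) (Fin n) ℝ where
  toFun F := Matrix.of fun i j => μ i j * F i j
  map_add' E F := by
    ext i j
    simp [Matrix.add_apply]
    ring
  map_smul' r F := by
    ext i j
    simp [Matrix.smul_apply]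
    ring

/-- Symmetrization change of basis. -/
noncomputable def cEquiv (n : ℕ) :
    Matrix (Fin n) (Fin n) ℝ ≃ₗ[ℝ] Matrix (Fin n) (Fin n) ℝ where
  toFun F := Matrix.of fun i j =>
    if i < j then F i j - F j i else if j < i then F i j + F j i else F i j
  invFun F := Matrix.of fun i j =>
    if i < j then (F i j + F j i) / 2 else if j < i then (F i j - F j i) / 2 else F i j
  map_add' E F := by
    ext i j
    simp only [Matrix.of_apply, Matrix.add_apply]
    split_ifs <;> ring
  map_smul' r F := by
    ext i j
    simp only [Matrix.of_apply, Matrix.smul_apply, RingHom.id_apply, smul_eq_mul]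
    split_ifs <;> ring
  left_inv F := by
    ext i j
    simp only [Matrix.of_apply]
    rcases lt_trichotomy i j with h | h | h
    · simp only [h, if_pos, h.not_gt, if_neg, if_false]
      ring
    · simp [h, lt_irrefl]
    · simp only [h, h.not_gt, if_neg, if_pos, if_false]
      ring
  right_inv F := by
    ext i j
    simp only [Matrix.of_apply]
    rcases lt_trichotomy i j with h | h | h
    · simp only [h, if_pos, h.not_gt, if_neg, if_false]
      ring
    · simp [h, lt_irrefl]
    · simp only [h, h.not_gt, if_neg, if_pos, if_false]
      ring

/-- Determinant from an eigenbasis. -/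
lemma det_of_eigen {ι M : Type*} [Fintype ι] [DecidableEq ι] [AddCommGroup M]
    [Module ℝ M] (b : Module.Basis ι ℝ M) (f : M →ₗ[ℝ] M) (μ : ι → ℝ)
    (h : ∀ i, f (b i) = μ i • b i) :
    LinearMap.det f = ∏ i, μ i := by
  rw [← LinearMap.det_toMatrix b]
  have hm : LinearMap.toMatrix b b f = Matrix.diagonal μ := by
    ext p q
    rw [LinearMap.toMatrix_apply, h, LinearEquiv.map_smul, Module.Basis.repr_self]
    simp only [Finsupp.smul_single, smul_eq_mul, mul_one, Finsupp.single_apply,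
      Matrix.diagonal_apply]
    by_cases hpq : p = q
    · simp [hpq]
    · simp [hpq, Ne.symm hpq]
  rw [hm, Matrix.det_diagonal]

lemma det_dMap (μ : Fin n → Fin n → ℝ) :
    LinearMap.det (dMap n μ) = ∏ p : Fin n × Fin n, μ p.1 p.2 := by
  apply det_of_eigen (Matrix.stdBasis ℝ (Fin n) (Fin n))
  rintro ⟨i, j⟩
  rw [Matrix.stdBasis_eq_single]
  ext k l
  simp only [dMap, LinearMap.coe_mk, AddHom.coe_mk, Matrix.of_apply, Matrix.smul_apply,
    Matrix.single, smul_eq_mul]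
  by_cases h : i = k ∧ j = l
  · obtain ⟨rfl, rfl⟩ := h
    simp
  · simp [h]

lemma gMap_comp (c : Fin n → Fin n → ℝ) (hc : ∀ i j, c i j = c j i) :
    gMap n c =
      (cEquiv n).toLinearMap ∘ₗ
        dMap n (fun i j => if i ≤ j then 1 + c i j else 1 - c i j) ∘ₗ
        (cEquiv n).symm.toLinearMap := by
  rw [← LinearMap.comp_assoc]
  apply LinearMap.ext
  intro F0
  have : F0 = (cEquiv n) ((cEquiv n).symm F0) := ((cEquiv n).apply_symm_apply F0).symm
  rw [LinearMap.comp_apply, LinearMap.comp_apply, LinearEquiv.coe_coe, LinearEquiv.coe_coe]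
  conv_lhs => rw [this]
  generalize (cEquiv n).symm F0 = F
  ext k l
  simp only [gMap, dMap, cEquiv, LinearMap.coe_mk, AddHom.coe_mk, LinearEquiv.coe_mk,
    Matrix.of_apply]
  rcases lt_trichotomy k l with h | h | h
  · simp only [h, if_pos, h.not_gt, if_neg, if_false, h.le, if_pos, h.not_ge, if_neg]
    rw [hc l k]
    ring
  · subst h
    simp only [lt_irrefl, if_neg, le_refl, if_pos, if_false]
    ring
  · simp only [h, if_pos, h.not_gt, if_neg, if_false, h.le, if_pos, h.not_ge, if_neg]
    rw [hc l k]
    ring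

lemma det_gMap (c : Fin n → Fin n → ℝ) (hc : ∀ i j, c i j = c j i) :
    LinearMap.det (gMap n c) =
      (∏ i, (1 + c i i)) * ∏ i, ∏ j ∈ Finset.Ioi i, (1 - c i j * c i j) := by
  rw [gMap_comp c hc, LinearMap.det_conj, det_dMap]
  rw [show (∏ p : Fin n × Fin n, (if p.1 ≤ p.2 then 1 + c p.1 p.2 else 1 - c p.1 p.2)) =
      ∏ i, ∏ j, (if i ≤ j then 1 + c i j else 1 - c i j) from
    Fintype.prod_prod_type _]
  set μ : Fin n → Fin n → ℝ := fun i j => if i ≤ j then 1 + c i j else 1 - c i j with hμ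
  have hswap : (∏ i, ∏ j ∈ Finset.Iio i, μ i j) = ∏ i, ∏ j ∈ Finset.Ioi i, μ j i := by
    rw [Finset.prod_sigma', Finset.prod_sigma']
    refine Finset.prod_nbij' (fun p => ⟨p.2, p.1⟩) (fun p => ⟨p.2, p.1⟩) ?_ ?_ ?_ ?_ ?_ <;> simp
  have hdisj : ∀ i : Fin n, Disjoint (Finset.Iio i) (Finset.Ici i) := fun i => by
    simp only [Finset.disjoint_left, Finset.mem_Iio, Finset.mem_Ici]
    exact fun j h => not_le.mpr h
  have huniv : ∀ i : Fin n, (Finset.Iio i).disjUnion (Finset.Ici i) (hdisj i) = Finset.univ := by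
    intro i
    ext j
    simpa using lt_or_ge j i
  have hstep : ∀ i : Fin n, (∏ j, μ i j) =
      (∏ j ∈ Finset.Iio i, μ i j) * (μ i i * ∏ j ∈ Finset.Ioi i, μ i j) := by
    intro i
    rw [Finset.mul_prod_Ioi_eq_prod_Ici, ← huniv i, Finset.prod_disjUnion]
  calc (∏ i, ∏ j, μ i j)
      = ∏ i, ((∏ j ∈ Finset.Iio i, μ i j) * (μ i i * ∏ j ∈ Finset.Ioi i, μ i j)) :=
        Finset.prod_congr rfl (fun i _ => hstep i)
    _ = (∏ i, ∏ j ∈ Finset.Iio i, μ i j) *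
        ((∏ i, μ i i) * ∏ i, ∏ j ∈ Finset.Ioi i, μ i j) := by
        rw [Finset.prod_mul_distrib, Finset.prod_mul_distrib]
    _ = (∏ i, μ i i) * ((∏ i, ∏ j ∈ Finset.Ioi i, μ j i) *
        (∏ i, ∏ j ∈ Finset.Ioi i, μ i j)) := by
        rw [hswap]; ring
    _ = (∏ i, μ i i) * (∏ i, ∏ j ∈ Finset.Ioi i, (μ j i * μ i j)) := by
        rw [← Finset.prod_mul_distrib]
        simp_rw [← Finset.prod_mul_distrib]
    _ = (∏ i, (1 + c i i)) * ∏ i, ∏ j ∈ Finset.Ioi i, (1 - c i j * c i j) := by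
        congr 1
        · exact Finset.prod_congr rfl fun i _ => by simp [hμ]
        · apply Finset.prod_congr rfl
          intro i _
          apply Finset.prod_congr rfl
          intro j hj
          rw [Finset.mem_Ioi] at hj
          have h1 : μ j i = 1 - c j i := by simp [hμ, hj.not_ge]
          have h2 : μ i j = 1 + c i j := by simp [hμ, hj.le]
          rw [h1, h2, hc j i]
          ring

/-- mul-left-right linear map -/
noncomputable def mulLR (n : ℕ) (A B : Matrix (Fin n) (Fin n) ℝ) :
    Matrix (Fin n) (Fin n) ℝ →ₗ[ℝ] Matrix (Fin n) (Fin n) ℝ where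
  toFun F := A * F * B
  map_add' E F := by simp [Matrix.mul_add, Matrix.add_mul]
  map_smul' r F := by simp [Matrix.mul_smul, Matrix.smul_mul]

/-- Conjugation equivalence `F ↦ U F Qᵀ`. -/
noncomputable def conjEquiv (n : ℕ) (U Q : Matrix (Fin n) (Fin n) ℝ)
    (hU : Uᵀ * U = 1) (hU' : U * Uᵀ = 1) (hQ : Qᵀ * Q = 1) (hQ' : Q * Qᵀ = 1) :
    Matrix (Fin n) (Fin n) ℝ ≃ₗ[ℝ] Matrix (Fin n) (Fin n) ℝ :=
  LinearEquiv.ofLinear (mulLR n U Qᵀ) (mulLR n Uᵀ Q)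
    (by
      apply LinearMap.ext; intro F
      simp only [LinearMap.comp_apply, mulLR, LinearMap.coe_mk, AddHom.coe_mk,
        LinearMap.id_apply]
      calc U * (Uᵀ * F * Q) * Qᵀ = (U * Uᵀ) * F * (Q * Qᵀ) := by
            simp only [Matrix.mul_assoc]
          _ = F := by rw [hU', hQ', Matrix.one_mul, Matrix.mul_one])
    (by
      apply LinearMap.ext; intro F
      simp only [LinearMap.comp_apply, mulLR, LinearMap.coe_mk, AddHom.coe_mk,
        LinearMap.id_apply]
      calc Uᵀ * (U * F * Qᵀ) * Q = (Uᵀ * U) * F * (Qᵀ * Q) := by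
            simp only [Matrix.mul_assoc]
          _ = F := by rw [hU, hQ, Matrix.one_mul, Matrix.mul_one])

end Aux

/-- The Jacobian of the transformation `W ↦ W − (Wᵀ)⁻¹` (nonsingular case of
Lemma 1): the determinant of `E ↦ E + (W⁻¹ E W⁻¹)ᵀ` equals
`∏ᵢ (1 + λᵢ⁻¹) ∏_{i<j} (1 − λᵢ⁻¹ λⱼ⁻¹)`, where `λᵢ` are the eigenvalues of
`WᵀW`. -/
theorem stmt_1 (n : ℕ) (hn : 0 < n) (W : Matrix (Fin n) (Fin n) ℝ) (hW : IsUnit W)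
    (hH : (Wᵀ * W).IsHermitian) :
    LinearMap.det (lemma1Deriv n W) =
      (∏ i : Fin n, (1 + (hH.eigenvalues i)⁻¹)) *
        ∏ i : Fin n, ∏ j ∈ Finset.Ioi i,
          (1 - (hH.eigenvalues i)⁻¹ * (hH.eigenvalues j)⁻¹) := by
  classical
  set lam : Fin n → ℝ := hH.eigenvalues with hlam
  set Q : Matrix (Fin n) (Fin n) ℝ := (hH.eigenvectorUnitary : Matrix (Fin n) (Fin n) ℝ)
    with hQdef
  -- Q is orthogonal
  have hstarQ : star Q = Qᵀ := by
    rw [Matrix.star_eq_conjTranspose, Matrix.conjTranspose_eq_transpose_of_trivial]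
  have hQ1 : Qᵀ * Q = 1 := by
    rw [← hstarQ]
    exact (Matrix.mem_unitaryGroup_iff'.mp hH.eigenvectorUnitary.2)
  have hQ2 : Q * Qᵀ = 1 := by
    rw [← hstarQ]
    exact (Matrix.mem_unitaryGroup_iff.mp hH.eigenvectorUnitary.2)
  -- spectral theorem
  have hspec : Wᵀ * W = Q * Matrix.diagonal lam * Qᵀ := by
    have h0 := hH.spectral_theorem
    rw [Unitary.conjStarAlgAut_apply] at h0
    rw [hstarQ] at h0
    have h1 : (RCLike.ofReal ∘ lam : Fin n → ℝ) = lam := by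
      funext i; simp [RCLike.ofReal_real_eq_id]
    rw [h1] at h0
    exact h0
  -- eigenvalues are positive
  have hdetW : W.det ≠ 0 :=
    ((Matrix.isUnit_iff_isUnit_det W).mp hW).ne_zero
  have hlampos : ∀ i, 0 < lam i := by
    have hps : (Wᵀ * W).PosSemidef := by
      have h2 := Matrix.posSemidef_conjTranspose_mul_self W
      rwa [Matrix.conjTranspose_eq_transpose_of_trivial] at h2
    have hnonneg : ∀ i, 0 ≤ lam i := fun i => hps.eigenvalues_nonneg i
    have hprod : (∏ i, lam i) ≠ 0 := by
      have h3 := hH.det_eq_prod_eigenvalues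
      have h4 : (Wᵀ * W).det = ∏ i, lam i := by
        rw [h3]; apply Finset.prod_congr rfl; intros; simp [RCLike.ofReal_real_eq_id, hlam]
      rw [← h4]
      simp only [Matrix.det_mul, Matrix.det_transpose]
      exact mul_ne_zero hdetW hdetW
    intro i
    have : lam i ≠ 0 := fun h => hprod (Finset.prod_eq_zero (Finset.mem_univ i) h)
    exact lt_of_le_of_ne (hnonneg i) (Ne.symm this)
  set d : Fin n → ℝ := fun i => Real.sqrt (lam i) with hd
  have hdpos : ∀ i, 0 < d i := fun i => Real.sqrt_pos.mpr (hlampos i)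
  have hdd : ∀ i, d i * d i = lam i := fun i => Real.mul_self_sqrt (hlampos i).le
  set U : Matrix (Fin n) (Fin n) ℝ := W * Q * Matrix.diagonal (fun i => (d i)⁻¹)
    with hUdef
  have hUt : Uᵀ = Matrix.diagonal (fun i => (d i)⁻¹) * Qᵀ * Wᵀ := by
    rw [hUdef]
    simp [Matrix.transpose_mul, Matrix.diagonal_transpose, Matrix.mul_assoc]
  have hU1 : Uᵀ * U = 1 := by
    rw [hUt, hUdef]
    calc Matrix.diagonal (fun i => (d i)⁻¹) * Qᵀ * Wᵀ * (W * Q * Matrix.diagonal fun i => (d i)⁻¹)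
        = Matrix.diagonal (fun i => (d i)⁻¹) * (Qᵀ * ((Wᵀ * W) * Q)) *
          Matrix.diagonal (fun i => (d i)⁻¹) := by
          simp only [Matrix.mul_assoc]
      _ = 1 := by
          rw [hspec]
          rw [show Q * Matrix.diagonal lam * Qᵀ * Q = Q * Matrix.diagonal lam * (Qᵀ * Q) by
            simp only [Matrix.mul_assoc], hQ1, Matrix.mul_one]
          rw [show Qᵀ * (Q * Matrix.diagonal lam) = (Qᵀ * Q) * Matrix.diagonal lam by
            simp only [Matrix.mul_assoc], hQ1, Matrix.one_mul]
          rw [Matrix.diagonal_mul_diagonal, Matrix.diagonal_mul_diagonal]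
          have hone : (fun i => (d i)⁻¹ * lam i * (d i)⁻¹) = fun _ => (1 : ℝ) := by
            funext i
            rw [← hdd i]
            have hne : d i ≠ 0 := (hdpos i).ne'
            field_simp
          rw [hone, Matrix.diagonal_one]
  have hU2 : U * Uᵀ = 1 := mul_eq_one_comm.mp hU1
  -- W⁻¹ = Q * diag d⁻¹ * Uᵀ
  have hWinv : W⁻¹ = Q * Matrix.diagonal (fun i => (d i)⁻¹) * Uᵀ := by
    apply Matrix.inv_eq_left_inv
    rw [hUt]
    calc Q * Matrix.diagonal (fun i => (d i)⁻¹) *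
          (Matrix.diagonal (fun i => (d i)⁻¹) * Qᵀ * Wᵀ) * W
        = Q * (Matrix.diagonal (fun i => (d i)⁻¹) * Matrix.diagonal (fun i => (d i)⁻¹)) *
          (Qᵀ * (Wᵀ * W)) := by simp only [Matrix.mul_assoc]
      _ = 1 := by
          rw [hspec, Matrix.diagonal_mul_diagonal]
          rw [show Qᵀ * (Q * Matrix.diagonal lam * Qᵀ) = (Qᵀ * Q) * Matrix.diagonal lam * Qᵀ by
            simp only [Matrix.mul_assoc], hQ1, Matrix.one_mul]
          rw [show Q * Matrix.diagonal (fun i => (d i)⁻¹ * (d i)⁻¹) *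
              (Matrix.diagonal lam * Qᵀ) =
              Q * (Matrix.diagonal (fun i => (d i)⁻¹ * (d i)⁻¹) * Matrix.diagonal lam) * Qᵀ by
            simp only [Matrix.mul_assoc], Matrix.diagonal_mul_diagonal]
          have : (fun i => (d i)⁻¹ * (d i)⁻¹ * lam i) = fun _ => (1 : ℝ) := by
            funext i
            rw [← hdd i]
            rw [← mul_inv]
            exact inv_mul_cancel₀ (mul_pos (hdpos i) (hdpos i)).ne'
          rw [this, Matrix.diagonal_one, Matrix.mul_one, hQ2]
  -- (W⁻¹)ᵀ = U * diag d⁻¹ * Qᵀ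
  have hWinvT : (W⁻¹)ᵀ = U * Matrix.diagonal (fun i => (d i)⁻¹) * Qᵀ := by
    rw [hWinv]
    simp [Matrix.transpose_mul, Matrix.diagonal_transpose, Matrix.mul_assoc]
  -- the conjugation
  set c : Fin n → Fin n → ℝ := fun i j => (d i * d j)⁻¹ with hc
  have hcsymm : ∀ i j, c i j = c j i := by intro i j; simp [hc, mul_comm]
  set e := conjEquiv n U Q hU1 hU2 hQ1 hQ2 with he
  have hkey : lemma1Deriv n W =
      (e : Matrix (Fin n) (Fin n) ℝ →ₗ[ℝ] Matrix (Fin n) (Fin n) ℝ) ∘ₗ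
        gMap n c ∘ₗ (e.symm : Matrix (Fin n) (Fin n) ℝ →ₗ[ℝ] Matrix (Fin n) (Fin n) ℝ) := by
    apply LinearMap.ext
    intro X
    have hesymm : e.symm X = Uᵀ * X * Q := rfl
    have hgform : gMap n c (Uᵀ * X * Q) =
        Uᵀ * X * Q + Matrix.diagonal (fun i => (d i)⁻¹) * (Uᵀ * X * Q)ᵀ *
          Matrix.diagonal (fun i => (d i)⁻¹) := by
      ext i j
      simp only [gMap, LinearMap.coe_mk, AddHom.coe_mk, Matrix.of_apply, Matrix.add_apply]
      congr 1
      rw [Matrix.mul_diagonal, Matrix.diagonal_mul, Matrix.transpose_apply]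
      simp only [hc]
      rw [mul_inv]
      ring
    show X + (W⁻¹ * X * W⁻¹)ᵀ = e (gMap n c (e.symm X))
    have heapp : ∀ Y, e Y = U * Y * Qᵀ := fun Y => rfl
    rw [hesymm, heapp, hgform]
    rw [Matrix.mul_add, Matrix.add_mul]
    congr 1
    · symm
      calc U * (Uᵀ * X * Q) * Qᵀ = (U * Uᵀ) * X * (Q * Qᵀ) := by simp only [Matrix.mul_assoc]
        _ = X := by rw [hU2, hQ2, Matrix.one_mul, Matrix.mul_one]
    · simp only [Matrix.transpose_mul, Matrix.transpose_transpose]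
      rw [hWinvT]
      simp only [Matrix.mul_assoc]
  rw [hkey, LinearMap.det_conj, det_gMap c hcsymm]
  congr 1
  · apply Finset.prod_congr rfl
    intro i _
    congr 1
    rw [hc]
    rw [← hdd i, mul_inv]
    simp [mul_inv]
  · apply Finset.prod_congr rfl
    intro i _
    apply Finset.prod_congr rfl
    intro j _
    congr 1
    rw [hc, ← hdd i, ← hdd j]
    field_simp
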